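/- Let d ≥ 1 and n ≥ 2. Mechanism 1, which on profile x = (x_1, …, x_n) outputs (1/4)δ_{x_1} + (1/4)δ_{x_2} + (1/2)δ_{(x_1+x_2)/2}, is a 2-approximation for maximum cost: for every profile x, E_{y∼f(x)} max_{i∈{1,…,n}} ‖y − x_i‖ ≤ 2 · inf_{y∈ℝ^d} max_{i∈{1,…,n}} ‖y − x_i‖. -/

import Mathlib

open MeasureTheory ENNReal

noncomputable section

/-- Points in `d`-dimensional Euclidean space. -/
abbrev Pt (d : ℕ) : Type := EuclideanSpace ℝ (Fin d)

/-- Mechanism 1 for `n ≥ 2` agents: output `x 1`'s and `x 2`'s locations w.p. 1/4 each,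
and their midpoint w.p. 1/2. -/
def mech1 {d n : ℕ} (hn : 2 ≤ n) (x : Fin n → Pt d) : Measure (Pt d) :=
  (1/4 : ℝ≥0∞) • Measure.dirac (x ⟨0, by omega⟩) + (1/4 : ℝ≥0∞) • Measure.dirac (x ⟨1, by omega⟩)
    + (1/2 : ℝ≥0∞) • Measure.dirac ((2 : ℝ)⁻¹ • (x ⟨0, by omega⟩ + x ⟨1, by omega⟩))

set_option maxHeartbeats 1000000 in
/-- For `d ≥ 1` and `n ≥ 2`, Mechanism 1 is a 2-approximation for maximum cost. -/
theorem mech1_maxCost_two_approx {d n : ℕ} (hd : 1 ≤ d) (hn : 2 ≤ n) (x : Fin n → Pt d) :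
    ∫ y, ⨆ i : Fin n, ‖y - x i‖ ∂(mech1 hn x)
      ≤ (2 : ℝ) * ⨅ y : Pt d, ⨆ i : Fin n, ‖y - x i‖ := by
  have hne : Nonempty (Fin n) := ⟨⟨0, by omega⟩⟩
  set a := x ⟨0, by omega⟩ with ha
  set b := x ⟨1, by omega⟩ with hb
  set m := (2 : ℝ)⁻¹ • (a + b) with hm
  set g : Pt d → ℝ := fun y => ⨆ i : Fin n, ‖y - x i‖ with hg
  have hgm : Measurable g :=
    Measurable.iSup fun i => (measurable_id.sub measurable_const).norm
  have hbdd : ∀ y : Pt d, BddAbove (Set.range fun i : Fin n => ‖y - x i‖) :=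
    fun y => (Set.finite_range _).bddAbove
  have hle : ∀ (y : Pt d) (i : Fin n), ‖y - x i‖ ≤ g y := fun y i => le_ciSup (hbdd y) i
  have hint : ∀ c : Pt d, Integrable g (Measure.dirac c) := fun c =>
    (integrable_const (g c)).congr (ae_eq_dirac' hgm).symm
  have h4t : ((1 : ℝ≥0∞)/4) ≠ ⊤ := by norm_num
  have h2t : ((1 : ℝ≥0∞)/2) ≠ ⊤ := by norm_num
  have hi4 : ∀ c : Pt d, Integrable g (((1:ℝ≥0∞)/4) • Measure.dirac c) := fun c =>
    (hint c).smul_measure h4t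
  have hi2 : ∀ c : Pt d, Integrable g (((1:ℝ≥0∞)/2) • Measure.dirac c) := fun c =>
    (hint c).smul_measure h2t
  have hI : ∫ y, g y ∂(mech1 hn x)
      = (1/4 : ℝ) * g a + (1/4 : ℝ) * g b + (1/2 : ℝ) * g m := by
    rw [mech1, integral_add_measure, integral_add_measure, integral_smul_measure,
      integral_smul_measure, integral_smul_measure,
      integral_dirac' g _ hgm.stronglyMeasurable, integral_dirac' g _ hgm.stronglyMeasurable,
      integral_dirac' g _ hgm.stronglyMeasurable]
    · simp only [smul_eq_mul, ENNReal.toReal_div, ENNReal.toReal_one, ENNReal.toReal_ofNat]; rfl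
    · exact hi4 _
    · exact hi4 _
    · exact (hi4 _).add_measure (hi4 _)
    · exact hi2 _
  have key : ∀ y : Pt d, (1/4 : ℝ) * g a + (1/4 : ℝ) * g b + (1/2 : ℝ) * g m ≤ 2 * g y := by
    intro y
    have h0 : ‖y - a‖ ≤ g y := hle y ⟨0, by omega⟩
    have h1 : ‖y - b‖ ≤ g y := hle y ⟨1, by omega⟩
    have tri : ∀ (c : Pt d) (i : Fin n), ‖c - x i‖ ≤ ‖c - y‖ + ‖y - x i‖ := by
      intro c i
      calc ‖c - x i‖ = ‖(c - y) + (y - x i)‖ := by rw [sub_add_sub_cancel]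
        _ ≤ ‖c - y‖ + ‖y - x i‖ := norm_add_le _ _
    have hga : g a ≤ 2 * g y := by
      refine ciSup_le fun i => ?_
      have := tri a i
      rw [norm_sub_rev a y] at this
      have := hle y i
      linarith [tri a i, hle y i]
    have hgb : g b ≤ 2 * g y := by
      refine ciSup_le fun i => ?_
      have h2 := tri b i
      rw [norm_sub_rev b y] at h2
      linarith [hle y i]
    have hmy : ‖m - y‖ ≤ g y := by
      have heq : m - y = (2 : ℝ)⁻¹ • ((a - y) + (b - y)) := by
        rw [hm, smul_add, smul_add]
        module
      have h3 : ‖(a - y) + (b - y)‖ ≤ g y + g y := by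
        have h5 := norm_add_le (a - y) (b - y)
        rw [norm_sub_rev a y, norm_sub_rev b y] at h5
        linarith
      calc ‖m - y‖ = ‖(2 : ℝ)⁻¹‖ * ‖(a - y) + (b - y)‖ := by rw [heq, norm_smul]
        _ ≤ ‖(2 : ℝ)⁻¹‖ * (g y + g y) :=
            mul_le_mul_of_nonneg_left h3 (norm_nonneg _)
        _ = g y := by rw [Real.norm_eq_abs]; rw [abs_of_nonneg (by norm_num)]; ring
    have hgm2 : g m ≤ 2 * g y := by
      refine ciSup_le fun i => ?_
      linarith [tri m i, hle y i]
    have h0' : 0 ≤ g y := le_trans (norm_nonneg _) h0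
    linarith
  have h2 : ∫ y, g y ∂(mech1 hn x) ≤ ⨅ y : Pt d, 2 * g y := by
    rw [hI]; exact le_ciInf key
  calc ∫ y, g y ∂(mech1 hn x) ≤ ⨅ y : Pt d, 2 * g y := h2
    _ = 2 * ⨅ y : Pt d, g y := (Real.mul_iInf_of_nonneg (by norm_num) _).symm
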